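/- For every ρ > 1, ∫_0^{π/2} I₀( (log ρ / 2)·cos θ )·cos θ dθ = (ρ − 1)/(√ρ · log ρ). -/

import Mathlib

open MeasureTheory Filter

/-- The modified Bessel function of the first kind `I₀(x) = ∑ (x/2)^{2n} / (n!)²`. -/
noncomputable def I0 (x : ℝ) : ℝ :=
  ∑' n : ℕ, (x / 2) ^ (2 * n) / (Nat.factorial n : ℝ) ^ 2

lemma cosJ (n : ℕ) : ∫ x in (0:ℝ)..(Real.pi/2), Real.cos x ^ (2*n+1)
    = (4:ℝ)^n * (n.factorial:ℝ)^2 / ((2*n+1).factorial : ℝ) := by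
  induction n with
  | zero => simp
  | succ n ih =>
    have h : 2*(n+1)+1 = (2*n+1)+2 := by ring
    rw [h, integral_cos_pow, ih]
    simp only [Real.cos_pi_div_two, Real.sin_zero, mul_zero, zero_mul, sub_zero, zero_sub,
      ne_eq, zero_pow, zero_div, zero_add, neg_zero]
    have h1 : ((2*n+1+2).factorial : ℝ) = (2*n+3) * (2*n+2) * ((2*n+1).factorial:ℝ) := by
      have : 2*n+1+2 = (2*n+2)+1 := by ring
      rw [this, Nat.factorial_succ]
      have : 2*n+2 = (2*n+1)+1 := by ring
      rw [this, Nat.factorial_succ]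
      push_cast; ring
    have h2 : ((n+1).factorial:ℝ) = (n+1) * (n.factorial:ℝ) := by
      rw [Nat.factorial_succ]; push_cast; ring
    rw [h1, h2]
    have hpos1 : ((2*n+1).factorial:ℝ) ≠ 0 := by positivity
    push_cast
    field_simp
    ring


theorem stmt13 (ρ : ℝ) (hρ : 1 < ρ) :
    ∫ θ in (0 : ℝ)..(Real.pi / 2), I0 ((Real.log ρ / 2) * Real.cos θ) * Real.cos θ
      = (ρ - 1) / (Real.sqrt ρ * Real.log ρ) := by
  have hρ0 : (0:ℝ) < ρ := by linarith
  set c : ℝ := Real.log ρ / 2 with hc_def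
  have hlog : 0 < Real.log ρ := Real.log_pos hρ
  have hc : 0 < c := by positivity
  set F : ℕ → ℝ → ℝ := fun n θ =>
    (c * Real.cos θ / 2) ^ (2*n) / (n.factorial:ℝ)^2 * Real.cos θ with hF_def
  have hFcont : ∀ n, Continuous (F n) := by
    intro n; simp only [hF_def]; fun_prop
  have hpt : ∀ θ : ℝ, I0 (c * Real.cos θ) * Real.cos θ = ∑' n, F n θ := by
    intro θ
    rw [I0, ← tsum_mul_right]
  have hle : (0:ℝ) ≤ Real.pi / 2 := by positivity
  rw [intervalIntegral.integral_of_le hle]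
  calc ∫ θ in Set.Ioc 0 (Real.pi/2), I0 (c * Real.cos θ) * Real.cos θ
      = ∫ θ in Set.Ioc 0 (Real.pi/2), ∑' n, F n θ := by
        exact setIntegral_congr_fun measurableSet_Ioc (fun θ _ => hpt θ)
    _ = ∑' n, ∫ θ in Set.Ioc 0 (Real.pi/2), F n θ := by
        refine (integral_tsum_of_summable_integral_norm (fun n => ?_) ?_).symm
        · exact (hFcont n).integrableOn_Ioc
        · have hb : ∀ n : ℕ, ∫ θ in Set.Ioc 0 (Real.pi/2), ‖F n θ‖
              ≤ (Real.pi/2) * ((c/2)^(2*n) / (n.factorial:ℝ)^2) := by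
            intro n
            have hbound : ∀ θ ∈ Set.Ioc (0:ℝ) (Real.pi/2),
                ‖F n θ‖ ≤ (c/2)^(2*n) / (n.factorial:ℝ)^2 := by
              intro θ _
              have h1 : |Real.cos θ| ≤ 1 := Real.abs_cos_le_one θ
              have h2 : |c * Real.cos θ / 2| ≤ c / 2 := by
                rw [abs_div, abs_two, abs_mul, abs_of_pos hc]
                nlinarith [abs_nonneg (Real.cos θ)]
              have heq : ‖F n θ‖
                  = |c * Real.cos θ / 2| ^ (2*n) / (n.factorial:ℝ)^2 * |Real.cos θ| := by
                rw [Real.norm_eq_abs]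
                simp only [hF_def]
                rw [abs_mul, abs_div, abs_pow, abs_pow, Nat.abs_cast]
              rw [heq]
              calc |c * Real.cos θ / 2| ^ (2*n) / (n.factorial:ℝ)^2 * |Real.cos θ|
                  ≤ (c/2) ^ (2*n) / (n.factorial:ℝ)^2 * 1 := by
                    gcongr
                _ = (c/2)^(2*n) / (n.factorial:ℝ)^2 := mul_one _
            calc ∫ θ in Set.Ioc 0 (Real.pi/2), ‖F n θ‖
                ≤ ∫ _θ in Set.Ioc 0 (Real.pi/2), ((c/2)^(2*n) / (n.factorial:ℝ)^2) := by
                  refine setIntegral_mono_on ((hFcont n).norm.integrableOn_Ioc)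
                    (integrableOn_const measure_Ioc_lt_top.ne) measurableSet_Ioc hbound
              _ = (Real.pi/2) * ((c/2)^(2*n) / (n.factorial:ℝ)^2) := by
                  rw [setIntegral_const, Real.volume_real_Ioc_of_le hle]
                  simp [ENNReal.toReal_ofReal hle]
          refine Summable.of_nonneg_of_le (fun n => ?_) hb ?_
          · exact integral_nonneg (fun θ => norm_nonneg _)
          · apply Summable.mul_left
            have hs : Summable (fun n : ℕ => (c^2/4)^n / (n.factorial:ℝ)) :=
              Real.summable_pow_div_factorial _
            refine hs.of_nonneg_of_le (fun n => by positivity) (fun n => ?_)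
            have e : (c/2)^(2*n) = (c^2/4)^n := by
              rw [pow_mul]; congr 1; ring
            rw [e]
            have h1 : (1:ℝ) ≤ (n.factorial:ℝ) := by exact_mod_cast n.factorial_pos
            gcongr
            nlinarith
    _ = ∑' n : ℕ, c^(2*n) / ((2*n+1).factorial : ℝ) := by
        congr 1; funext n
        rw [← intervalIntegral.integral_of_le hle]
        have hFe : ∀ θ, F n θ = (c/2)^(2*n) / (n.factorial:ℝ)^2 * Real.cos θ ^ (2*n+1) := by
          intro θ
          simp only [hF_def]
          have h : c * Real.cos θ / 2 = (c/2) * Real.cos θ := by ring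
          rw [h, mul_pow, pow_succ]
          ring
        simp_rw [hFe]
        rw [intervalIntegral.integral_const_mul, cosJ]
        have h4 : (c/2)^(2*n) * 4^n = c^(2*n) := by
          rw [pow_mul, pow_mul, ← mul_pow]
          congr 1; ring
        have hne : ((n.factorial:ℝ))^2 ≠ 0 := by positivity
        have step : (c/2)^(2*n) / (n.factorial:ℝ)^2
              * ((4:ℝ)^n * (n.factorial:ℝ)^2 / ((2*n+1).factorial : ℝ))
            = ((c/2)^(2*n) * 4^n) / ((2*n+1).factorial : ℝ)
              * ((n.factorial:ℝ)^2 / (n.factorial:ℝ)^2) := by ring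
        rw [step, div_self hne, mul_one, h4]
    _ = Real.sinh c / c := by
        rw [Real.sinh_eq_tsum, ← tsum_div_const]
        congr 1; funext n
        rw [pow_succ]
        field_simp
    _ = (ρ - 1) / (Real.sqrt ρ * Real.log ρ) := by
        have hexp : Real.exp c = Real.sqrt ρ := by
          rw [Real.sqrt_eq_rpow, Real.rpow_def_of_pos hρ0]
          congr 1; rw [hc_def]; ring
        have hsq : Real.sqrt ρ * Real.sqrt ρ = ρ := Real.mul_self_sqrt hρ0.le
        have hsqpos : 0 < Real.sqrt ρ := Real.sqrt_pos.2 hρ0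
        rw [Real.sinh_eq, hexp, Real.exp_neg, hexp, hc_def]
        field_simp
        nlinarith [hsq]
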